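/- Assume char k ≠ 2 and let q ∈ k satisfy q² = -1. Let V be 2-dimensional with basis x, y, and let A be the algebra k⟨x,y⟩/(y² - qx², xy - qyx). Then xy² = 0 in A, the third graded component A_3 is zero, and the Hilbert series of A is 1 + 2t + 2t². -/

import Mathlib

noncomputable section

variable (k : Type) [Field k] (q : k)

/-- The defining relations `y² = q x²` and `x y = q y x` of the algebra
`A = k⟨x,y⟩/(y² - qx², xy - qyx)`, with `x` and `y` the generators indexed by
`false` and `true`. -/
inductive ExRel : FreeAlgebra k Bool → FreeAlgebra k Bool → Prop
  | rel1 : ExRel (FreeAlgebra.ι k true * FreeAlgebra.ι k true)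
      (algebraMap k _ q * (FreeAlgebra.ι k false * FreeAlgebra.ι k false))
  | rel2 : ExRel (FreeAlgebra.ι k false * FreeAlgebra.ι k true)
      (algebraMap k _ q * (FreeAlgebra.ι k true * FreeAlgebra.ι k false))

/-- The algebra `A = k⟨x,y⟩/(y² - qx², xy - qyx)`. -/
abbrev ExAlg : Type := RingQuot (ExRel k q)

/-- The generator `x` of `A`. -/
def genX : ExAlg k q := RingQuot.mkAlgHom k (ExRel k q) (FreeAlgebra.ι k false)

/-- The generator `y` of `A`. -/
def genY : ExAlg k q := RingQuot.mkAlgHom k (ExRel k q) (FreeAlgebra.ι k true)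

/-- The `n`-th graded component of `A`: the span of all products of `n`
generators. -/
def ExGrade (m : ℕ) : Submodule k (ExAlg k q) :=
  Submodule.span k
    {a | ∃ l : List Bool, l.length = m ∧
      a = (l.map fun b => if b then genY k q else genX k q).prod}

/-! ### Abstract computations with the relations -/

section Abstract

variable {k} {A : Type} [Ring A] [Algebra k A] {x y : A}
variable (hyy : y * y = algebraMap k A q * (x * x))
variable (hxy : x * y = algebraMap k A q * (y * x))
variable (h2 : (2 : k) ≠ 0) (hq : q ^ 2 = -1)

lemma hcomm (a : k) (u w : A) : u * (algebraMap k A a * w) = algebraMap k A a * (u * w) := by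
  rw [← mul_assoc, ← Algebra.commutes, mul_assoc]

lemma alg_cancel {a : k} (ha : a ≠ 0) {w : A} (h : algebraMap k A a * w = 0) : w = 0 := by
  have := congrArg (fun z => algebraMap k A a⁻¹ * z) h
  simpa [← mul_assoc, ← map_mul, inv_mul_cancel₀ ha] using this

variable {q}
include h2 hq

lemma factor_ne : q - q * (q * q) ≠ 0 := by
  have hqq : q * q = -1 := by rw [← sq]; exact hq
  have : q - q * (q * q) = q * 2 := by rw [hqq]; ring
  rw [this]
  have hqne : q ≠ 0 := fun h => by
    rw [h] at hqq; simp at hqq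
  exact mul_ne_zero hqne h2

include hyy hxy

lemma L_xxx : x * (x * x) = 0 := by
  have e1 : x * (y * y) = algebraMap k A q * (x * (x * x)) := by rw [hyy, hcomm]
  have e2 : x * (y * y) =
      algebraMap k A q * (algebraMap k A q * (algebraMap k A q * (x * (x * x)))) := by
    calc x * (y * y) = (x * y) * y := (mul_assoc _ _ _).symm
    _ = (algebraMap k A q * (y * x)) * y := by rw [hxy]
    _ = algebraMap k A q * (y * (x * y)) := by rw [mul_assoc, mul_assoc]
    _ = algebraMap k A q * (y * (algebraMap k A q * (y * x))) := by rw [hxy]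
    _ = algebraMap k A q * (algebraMap k A q * (y * (y * x))) := by rw [hcomm]
    _ = algebraMap k A q * (algebraMap k A q * ((y * y) * x)) := by rw [mul_assoc]
    _ = algebraMap k A q * (algebraMap k A q * ((algebraMap k A q * (x * x)) * x)) := by
        rw [hyy]
    _ = algebraMap k A q * (algebraMap k A q * (algebraMap k A q * (x * (x * x)))) := by
        rw [mul_assoc, mul_assoc]
  have key : algebraMap k A (q - q * (q * q)) * (x * (x * x)) = 0 := by
    rw [map_sub, sub_mul, ← e1, map_mul, map_mul, mul_assoc, mul_assoc, ← e2, sub_self]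
  exact alg_cancel (factor_ne h2 hq) key

lemma L_yxx : y * (x * x) = 0 := by
  have e1 : y * (y * y) = algebraMap k A q * (y * (x * x)) := by rw [hyy, hcomm]
  have e2 : y * (y * y) =
      algebraMap k A q * (algebraMap k A q * (algebraMap k A q * (y * (x * x)))) := by
    calc y * (y * y) = (y * y) * y := (mul_assoc _ _ _).symm
    _ = (algebraMap k A q * (x * x)) * y := by rw [hyy]
    _ = algebraMap k A q * (x * (x * y)) := by rw [mul_assoc, mul_assoc]
    _ = algebraMap k A q * (x * (algebraMap k A q * (y * x))) := by rw [hxy]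
    _ = algebraMap k A q * (algebraMap k A q * (x * (y * x))) := by rw [hcomm]
    _ = algebraMap k A q * (algebraMap k A q * ((x * y) * x)) := by rw [mul_assoc]
    _ = algebraMap k A q * (algebraMap k A q * ((algebraMap k A q * (y * x)) * x)) := by
        rw [hxy]
    _ = algebraMap k A q * (algebraMap k A q * (algebraMap k A q * (y * (x * x)))) := by
        rw [mul_assoc, mul_assoc]
  have key : algebraMap k A (q - q * (q * q)) * (y * (x * x)) = 0 := by
    rw [map_sub, sub_mul, ← e1, map_mul, map_mul, mul_assoc, mul_assoc, ← e2, sub_self]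
  exact alg_cancel (factor_ne h2 hq) key

lemma L_xyx : x * (y * x) = 0 := by
  rw [← mul_assoc, hxy, mul_assoc, mul_assoc, L_yxx hyy hxy h2 hq, mul_zero]

lemma L_xxy : x * (x * y) = 0 := by
  rw [hxy, hcomm, L_xyx hyy hxy h2 hq, mul_zero]

lemma L_xyy : x * (y * y) = 0 := by
  rw [hyy, hcomm, L_xxx hyy hxy h2 hq, mul_zero]

lemma L_yyx : y * (y * x) = 0 := by
  rw [← mul_assoc, hyy, mul_assoc, mul_assoc, L_xxx hyy hxy h2 hq, mul_zero]

lemma L_yxy : y * (x * y) = 0 := by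
  rw [hxy, hcomm, L_yyx hyy hxy h2 hq, mul_zero]

lemma L_yyy : y * (y * y) = 0 := by
  rw [hyy, hcomm, L_yxx hyy hxy h2 hq, mul_zero]

end Abstract

/-! ### The concrete 5-dimensional representation -/

def Xm : Matrix (Fin 5) (Fin 5) k := Matrix.of fun i j =>
  if i = 1 ∧ j = 0 then 1 else if i = 3 ∧ j = 1 then 1 else if i = 4 ∧ j = 2 then q else 0

def Ym : Matrix (Fin 5) (Fin 5) k := Matrix.of fun i j =>
  if i = 2 ∧ j = 0 then 1 else if i = 4 ∧ j = 1 then 1 else if i = 3 ∧ j = 2 then q else 0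

lemma relY : Ym k q * Ym k q = q • (Xm k q * Xm k q) := by
  ext i j
  fin_cases i <;> fin_cases j <;>
    simp (config := { decide := true }) [Xm, Ym, Matrix.mul_apply, Fin.sum_univ_five]

lemma relX : Xm k q * Ym k q = q • (Ym k q * Xm k q) := by
  ext i j
  fin_cases i <;> fin_cases j <;>
    simp (config := { decide := true }) [Xm, Ym, Matrix.mul_apply, Fin.sum_univ_five]

def phi : ExAlg k q →ₐ[k] Matrix (Fin 5) (Fin 5) k :=
  RingQuot.liftAlgHom k
    ⟨FreeAlgebra.lift k fun b => if b then Ym k q else Xm k q, by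
      rintro _ _ (h | h) <;>
        simp only [map_mul, FreeAlgebra.lift_ι_apply, AlgHom.commutes, if_true, if_false,
          Bool.false_eq_true, ← Algebra.smul_def, map_smul]
      · exact relY k q
      · exact relX k q⟩

lemma phiX : phi k q (genX k q) = Xm k q := by
  simp [phi, genX, RingQuot.liftAlgHom_mkAlgHom_apply, FreeAlgebra.lift_ι_apply]

lemma phiY : phi k q (genY k q) = Ym k q := by
  simp [phi, genY, RingQuot.liftAlgHom_mkAlgHom_apply, FreeAlgebra.lift_ι_apply]

/-! ### Relations in A -/

lemma rel_yy : genY k q * genY k q = algebraMap k (ExAlg k q) q * (genX k q * genX k q) := by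
  have := RingQuot.mkAlgHom_rel k (ExRel.rel1 (k := k) (q := q))
  simpa [genX, genY, map_mul] using this

lemma rel_xy : genX k q * genY k q = algebraMap k (ExAlg k q) q * (genY k q * genX k q) := by
  have := RingQuot.mkAlgHom_rel k (ExRel.rel2 (k := k) (q := q))
  simpa [genX, genY, map_mul] using this

lemma exAlg_one_ne_zero : (1 : ExAlg k q) ≠ 0 := by
  intro h
  have := congrArg (phi k q) h
  rw [map_one, map_zero] at this
  exact one_ne_zero this

/-! ### Linear independence -/

lemma indep1 : LinearIndependent k ![genX k q, genY k q] := by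
  rw [LinearIndependent.pair_iff]
  intro s t hst
  have h' : algebraMap k (ExAlg k q) s * genX k q + algebraMap k (ExAlg k q) t * genY k q = 0 := by
    rw [← Algebra.smul_def, ← Algebra.smul_def]; exact hst
  have hm := congrArg (phi k q) h'
  simp only [map_add, map_mul, AlgHom.commutes, phiX, phiY, map_zero] at hm
  constructor
  · have := congrArg (fun M => M 1 0) hm
    simpa (config := { decide := true }) [Xm, Ym, Matrix.mul_apply, Fin.sum_univ_five,
      Matrix.add_apply, Matrix.algebraMap_matrix_apply] using this
  · have := congrArg (fun M => M 2 0) hm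
    simpa (config := { decide := true }) [Xm, Ym, Matrix.mul_apply, Fin.sum_univ_five,
      Matrix.add_apply, Matrix.algebraMap_matrix_apply] using this

lemma indep2 : LinearIndependent k ![genX k q * genX k q, genY k q * genX k q] := by
  rw [LinearIndependent.pair_iff]
  intro s t hst
  have h' : algebraMap k (ExAlg k q) s * (genX k q * genX k q) +
      algebraMap k (ExAlg k q) t * (genY k q * genX k q) = 0 := by
    rw [← Algebra.smul_def, ← Algebra.smul_def]; exact hst
  have hm := congrArg (phi k q) h'
  simp only [map_add, map_mul, AlgHom.commutes, phiX, phiY, map_zero] at hm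
  constructor
  · have := congrArg (fun M => M 3 0) hm
    simpa (config := { decide := true }) [Xm, Ym, Matrix.mul_apply, Fin.sum_univ_five,
      Matrix.add_apply, Matrix.algebraMap_matrix_apply] using this
  · have := congrArg (fun M => M 4 0) hm
    simpa (config := { decide := true }) [Xm, Ym, Matrix.mul_apply, Fin.sum_univ_five,
      Matrix.add_apply, Matrix.algebraMap_matrix_apply] using this

/-! ### Description of the graded pieces -/

lemma grade0_set :
    {a : ExAlg k q | ∃ l : List Bool, l.length = 0 ∧
      a = (l.map fun b => if b then genY k q else genX k q).prod} = {1} := by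
  ext a
  constructor
  · rintro ⟨l, hl, rfl⟩
    rw [List.length_eq_zero_iff] at hl
    subst hl; simp
  · rintro rfl
    exact ⟨[], rfl, by simp⟩

lemma grade1_set :
    {a : ExAlg k q | ∃ l : List Bool, l.length = 1 ∧
      a = (l.map fun b => if b then genY k q else genX k q).prod} =
      {genX k q, genY k q} := by
  ext a
  constructor
  · rintro ⟨l, hl, rfl⟩
    rw [List.length_eq_one_iff] at hl
    obtain ⟨b, rfl⟩ := hl
    cases b
    · left; simp
    · right; simp
  · rintro (rfl | rfl)
    · exact ⟨[false], rfl, by simp⟩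
    · exact ⟨[true], rfl, by simp⟩

lemma grade2_set :
    {a : ExAlg k q | ∃ l : List Bool, l.length = 2 ∧
      a = (l.map fun b => if b then genY k q else genX k q).prod} =
      {genX k q * genX k q, genX k q * genY k q, genY k q * genX k q, genY k q * genY k q} := by
  ext a
  constructor
  · rintro ⟨l, hl, rfl⟩
    rw [List.length_eq_two] at hl
    obtain ⟨b, c, rfl⟩ := hl
    cases b <;> cases c <;> simp [Set.mem_insert_iff]
  · intro h
    simp only [Set.mem_insert_iff, Set.mem_singleton_iff] at h
    rcases h with rfl | rfl | rfl | rfl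
    · exact ⟨[false, false], rfl, by simp⟩
    · exact ⟨[false, true], rfl, by simp⟩
    · exact ⟨[true, false], rfl, by simp⟩
    · exact ⟨[true, true], rfl, by simp⟩


/-- if `char k ≠ 2` and `q² = -1`, then in
`A = k⟨x,y⟩/(y² - qx², xy - qyx)` one has `x y² = 0`, the third graded
component vanishes, and the Hilbert series of `A` is `1 + 2t + 2t²`. -/
theorem example_algebra_hilbert_series (h2 : (2 : k) ≠ 0) (hq : q ^ 2 = -1) :
    genX k q * genY k q * genY k q = 0 ∧
    ExGrade k q 3 = ⊥ ∧
    Module.finrank k (ExGrade k q 0) = 1 ∧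
    Module.finrank k (ExGrade k q 1) = 2 ∧
    Module.finrank k (ExGrade k q 2) = 2 ∧
    (∀ m : ℕ, 3 ≤ m → ExGrade k q m = ⊥) := by
  have hyy := rel_yy k q
  have hxy := rel_xy k q
  have prod3 : ∀ l : List Bool, l.length = 3 →
      (l.map fun b => if b then genY k q else genX k q).prod = 0 := by
    intro l hl
    obtain ⟨a, b, c, rfl⟩ := List.length_eq_three.mp hl
    cases a <;> cases b <;> cases c <;>
      simp only [List.map_cons, List.map_nil, List.prod_cons, List.prod_nil, mul_one,
        if_true, if_false, Bool.false_eq_true]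
    · exact L_xxx hyy hxy h2 hq
    · exact L_xxy hyy hxy h2 hq
    · exact L_xyx hyy hxy h2 hq
    · exact L_xyy hyy hxy h2 hq
    · exact L_yxx hyy hxy h2 hq
    · exact L_yxy hyy hxy h2 hq
    · exact L_yyx hyy hxy h2 hq
    · exact L_yyy hyy hxy h2 hq
  have hbot : ∀ m : ℕ, 3 ≤ m → ExGrade k q m = ⊥ := by
    intro m hm
    rw [ExGrade, Submodule.span_eq_bot]
    rintro a ⟨l, hl, rfl⟩
    have hsplit : l = l.take 3 ++ l.drop 3 := (List.take_append_drop 3 l).symm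
    rw [hsplit, List.map_append, List.prod_append,
      prod3 (l.take 3) (by rw [List.length_take, hl]; omega), zero_mul]
  refine ⟨?_, hbot 3 le_rfl, ?_, ?_, ?_, hbot⟩
  · rw [mul_assoc]
    exact L_xyy hyy hxy h2 hq
  · rw [ExGrade, grade0_set]
    exact finrank_span_singleton (exAlg_one_ne_zero k q)
  · rw [ExGrade, grade1_set, ← Matrix.range_cons_cons_empty (genX k q) (genY k q) ![]]
    rw [finrank_span_eq_card (indep1 k q)]
    simp
  · have hspan : ExGrade k q 2 =
        Submodule.span k {genX k q * genX k q, genY k q * genX k q} := by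
      rw [ExGrade, grade2_set]
      apply le_antisymm
      · rw [Submodule.span_le]
        intro a ha
        simp only [Set.mem_insert_iff, Set.mem_singleton_iff] at ha
        rcases ha with rfl | rfl | rfl | rfl
        · exact Submodule.subset_span (Set.mem_insert _ _)
        · rw [hxy, ← Algebra.smul_def]
          exact Submodule.smul_mem _ q
            (Submodule.subset_span (Set.mem_insert_of_mem _ rfl))
        · exact Submodule.subset_span (Set.mem_insert_of_mem _ rfl)
        · rw [hyy, ← Algebra.smul_def]
          exact Submodule.smul_mem _ q (Submodule.subset_span (Set.mem_insert _ _))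
      · apply Submodule.span_mono
        intro a ha
        simp only [Set.mem_insert_iff, Set.mem_singleton_iff] at ha
        rcases ha with rfl | rfl
        · exact Set.mem_insert _ _
        · exact Set.mem_insert_of_mem _ (Set.mem_insert_of_mem _ (Set.mem_insert _ _))
    rw [hspan,
      ← Matrix.range_cons_cons_empty (genX k q * genX k q) (genY k q * genX k q) ![]]
    rw [finrank_span_eq_card (indep2 k q)]
    simp


end
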